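/- Let P, Q be probability measures with densities p, q with respect to μ, h²(P,Q) = 1 - ∫√(pq) dμ the (halved) squared Hellinger distance, and V(P,Q) = ∫|q-p| dμ. Then 4h²(P,Q)(2 - h²(P,Q)) ≥ V(P,Q)². -/

import Mathlib

open MeasureTheory

theorem stmt_13 {Ω : Type*} [MeasurableSpace Ω] (μ : Measure Ω)
    (p q : Ω → ℝ) (hpm : Measurable p) (hqm : Measurable q)
    (hp0 : ∀ x, 0 ≤ p x) (hq0 : ∀ x, 0 ≤ q x)
    (hp1 : ∫ x, p x ∂μ = 1) (hq1 : ∫ x, q x ∂μ = 1)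
    (hVint : Integrable (fun x => |q x - p x|) μ)
    (hHint : Integrable (fun x => Real.sqrt (p x * q x)) μ) :
    4 * (1 - ∫ x, Real.sqrt (p x * q x) ∂μ) * (2 - (1 - ∫ x, Real.sqrt (p x * q x) ∂μ)) ≥
      (∫ x, |q x - p x| ∂μ) ^ 2 := by
  set S := ∫ x, Real.sqrt (p x * q x) ∂μ with hS
  have hr : ∀ y : ℝ, y ^ (2:ℝ) = y * y := fun y => by
    have : (2:ℝ) = ((2:ℕ):ℝ) := by norm_num
    rw [this, Real.rpow_natCast]; ring
  have hpI : Integrable p μ := by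
    by_contra h
    rw [integral_undef h] at hp1; norm_num at hp1
  have hqI : Integrable q μ := by
    by_contra h
    rw [integral_undef h] at hq1; norm_num at hq1
  set f : Ω → ℝ := fun x => |Real.sqrt (q x) - Real.sqrt (p x)| with hf
  set g : Ω → ℝ := fun x => Real.sqrt (q x) + Real.sqrt (p x) with hg
  have hfm : Measurable f := ((hqm.sqrt.sub hpm.sqrt).abs)
  have hgm : Measurable g := hqm.sqrt.add hpm.sqrt
  have hsqrtmul : ∀ x, Real.sqrt (p x) * Real.sqrt (q x) = Real.sqrt (p x * q x) := by
    intro x; rw [Real.sqrt_mul (hp0 x)]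
  have hf2 : ∀ x, f x ^ (2:ℝ) = q x + p x - 2 * Real.sqrt (p x * q x) := by
    intro x
    rw [hr, hf]
    simp only
    rw [← abs_mul, abs_of_nonneg]
    · have h1 := Real.sq_sqrt (hq0 x)
      have h2 := Real.sq_sqrt (hp0 x)
      nlinarith [hsqrtmul x]
    · exact mul_self_nonneg _
  have hg2 : ∀ x, g x ^ (2:ℝ) = q x + p x + 2 * Real.sqrt (p x * q x) := by
    intro x
    rw [hr, hg]
    have h1 := Real.sq_sqrt (hq0 x)
    have h2 := Real.sq_sqrt (hp0 x)
    simp only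
    nlinarith [hsqrtmul x]
  have hqpI : Integrable (fun x => q x + p x) μ := hqI.add hpI
  have hf2I : Integrable (fun x => f x ^ (2:ℝ)) μ := by
    have : Integrable (fun x => q x + p x - 2 * Real.sqrt (p x * q x)) μ :=
      hqpI.sub (hHint.const_mul 2)
    exact this.congr (Filter.Eventually.of_forall fun x => (hf2 x).symm)
  have hg2I : Integrable (fun x => g x ^ (2:ℝ)) μ := by
    have : Integrable (fun x => q x + p x + 2 * Real.sqrt (p x * q x)) μ :=
      hqpI.add (hHint.const_mul 2)
    exact this.congr (Filter.Eventually.of_forall fun x => (hg2 x).symm)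
  have hfL2 : MemLp f 2 μ := by
    rw [memLp_two_iff_integrable_sq hfm.aestronglyMeasurable]
    exact hf2I.congr (Filter.Eventually.of_forall fun x => by
      show f x ^ (2:ℝ) = f x ^ 2
      rw [hr, sq])
  have hgL2 : MemLp g 2 μ := by
    rw [memLp_two_iff_integrable_sq hgm.aestronglyMeasurable]
    exact hg2I.congr (Filter.Eventually.of_forall fun x => by
      show g x ^ (2:ℝ) = g x ^ 2
      rw [hr, sq])
  have hfg : ∀ x, f x * g x = |q x - p x| := by
    intro x
    have h1 : (Real.sqrt (q x) - Real.sqrt (p x)) * (Real.sqrt (q x) + Real.sqrt (p x))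
        = q x - p x := by
      have := Real.sq_sqrt (hq0 x)
      have := Real.sq_sqrt (hp0 x)
      nlinarith
    have h2 : (0:ℝ) ≤ g x := add_nonneg (Real.sqrt_nonneg _) (Real.sqrt_nonneg _)
    rw [hf]
    simp only
    rw [← abs_of_nonneg h2, ← abs_mul, h1]
  have hconj : (2:ℝ).HolderConjugate 2 := by constructor <;> norm_num
  have hCS := integral_mul_le_Lp_mul_Lq_of_nonneg (μ := μ) hconj
    (Filter.Eventually.of_forall fun x => abs_nonneg _)
    (Filter.Eventually.of_forall fun x =>
      add_nonneg (Real.sqrt_nonneg _) (Real.sqrt_nonneg _))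
    (by rwa [show ENNReal.ofReal 2 = 2 by norm_num])
    (by rwa [show ENNReal.ofReal 2 = 2 by norm_num])
  rw [show (∫ a, f a * g a ∂μ) = ∫ x, |q x - p x| ∂μ from
    integral_congr_ae (Filter.Eventually.of_forall hfg)] at hCS
  have hA : ∫ x, f x ^ (2:ℝ) ∂μ = 2 - 2 * S := by
    rw [integral_congr_ae (Filter.Eventually.of_forall hf2),
      integral_sub hqpI (hHint.const_mul 2), integral_add hqI hpI,
      integral_const_mul, hp1, hq1]
    ring
  have hB : ∫ x, g x ^ (2:ℝ) ∂μ = 2 + 2 * S := by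
    rw [integral_congr_ae (Filter.Eventually.of_forall hg2),
      integral_add hqpI (hHint.const_mul 2), integral_add hqI hpI,
      integral_const_mul, hp1, hq1]
    ring
  rw [hA, hB] at hCS
  have hAnn : (0:ℝ) ≤ 2 - 2 * S := by
    have h0 : 0 ≤ ∫ x, f x ^ (2:ℝ) ∂μ := integral_nonneg fun x => by
      rw [hr]; exact mul_self_nonneg _
    rw [hA] at h0; linarith
  have hSnn : 0 ≤ S := integral_nonneg fun x => Real.sqrt_nonneg _
  have hBnn : (0:ℝ) ≤ 2 + 2 * S := by linarith
  have hVnn : 0 ≤ ∫ x, |q x - p x| ∂μ := integral_nonneg fun x => abs_nonneg _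
  have hsq : (∫ x, |q x - p x| ∂μ) ^ 2 ≤ (2 - 2 * S) * (2 + 2 * S) := by
    have hms := mul_self_le_mul_self hVnn hCS
    calc (∫ x, |q x - p x| ∂μ) ^ 2
        = (∫ x, |q x - p x| ∂μ) * (∫ x, |q x - p x| ∂μ) := sq _
      _ ≤ ((2 - 2*S) ^ ((1:ℝ)/2) * (2 + 2*S) ^ ((1:ℝ)/2)) *
          ((2 - 2*S) ^ ((1:ℝ)/2) * (2 + 2*S) ^ ((1:ℝ)/2)) := hms
      _ = ((2 - 2*S) ^ ((1:ℝ)/2) * (2 - 2*S) ^ ((1:ℝ)/2)) *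
          ((2 + 2*S) ^ ((1:ℝ)/2) * (2 + 2*S) ^ ((1:ℝ)/2)) := by ring
      _ = (2 - 2 * S) * (2 + 2 * S) := by
          rw [← Real.rpow_add' hAnn (by norm_num), ← Real.rpow_add' hBnn (by norm_num)]
          norm_num
  have hfin : (2 - 2*S) * (2 + 2*S) = 4 * (1 - S) * (2 - (1 - S)) := by ring
  linarith [hsq]
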